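/- Let D : ℂ^N → ℂ^N be Lipschitz continuous with constant 1 + ε for some ε > 0, let A ∈ ℂ^{M×N}, P ∈ ℂ^{N×N}, and α > 0. Define T(x) = D(x − αP·Aᴴ(Ax − y)) for a fixed y ∈ ℂ^M. If x* is a fixed point of T and (1+ε)·‖I − αP AᴴA‖₂ < 1, then the iterates x_{k+1} = T(x_k) converge to x* with ‖x_{k+1} − x*‖ ≤ (1+ε)‖I − αP AᴴA‖₂ · ‖x_k − x*‖. -/
import Mathlib


open Matrix in
theorem stmt_1 (M N : ℕ) (D : EuclideanSpace ℂ (Fin N) → EuclideanSpace ℂ (Fin N))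
    (ε : ℝ) (hε : 0 < ε)
    (hD : ∀ x y, ‖D x - D y‖ ≤ (1 + ε) * ‖x - y‖)
    (A : Matrix (Fin M) (Fin N) ℂ) (P : Matrix (Fin N) (Fin N) ℂ)
    (α : ℝ) (hα : 0 < α) (y : EuclideanSpace ℂ (Fin M))
    (T : EuclideanSpace ℂ (Fin N) → EuclideanSpace ℂ (Fin N))
    (hT : ∀ x, T x = D (x - (α : ℂ) •
      Matrix.toEuclideanLin P (Matrix.toEuclideanLin Aᴴ (Matrix.toEuclideanLin A x - y))))
    (hcontr : (1 + ε) * ‖(Matrix.toEuclideanCLM (𝕜 := ℂ) (1 - (α : ℂ) • (P * (Aᴴ * A))) : EuclideanSpace ℂ (Fin N) →L[ℂ] EuclideanSpace ℂ (Fin N))‖ < 1)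
    (xs : EuclideanSpace ℂ (Fin N)) (hfix : T xs = xs)
    (x : ℕ → EuclideanSpace ℂ (Fin N)) (hx : ∀ k, x (k + 1) = T (x k)) :
    (∀ k, ‖x (k + 1) - xs‖ ≤
        (1 + ε) * ‖(Matrix.toEuclideanCLM (𝕜 := ℂ) (1 - (α : ℂ) • (P * (Aᴴ * A))) : EuclideanSpace ℂ (Fin N) →L[ℂ] EuclideanSpace ℂ (Fin N))‖ *
          ‖x k - xs‖) ∧
      Filter.Tendsto x Filter.atTop (nhds xs) := by
  set L := (Matrix.toEuclideanCLM (𝕜 := ℂ) (1 - (α : ℂ) • (P * (Aᴴ * A))) :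
    EuclideanSpace ℂ (Fin N) →L[ℂ] EuclideanSpace ℂ (Fin N)) with hL
  set c := (1 + ε) * ‖L‖ with hc
  have hc0 : 0 ≤ c := mul_nonneg (by linarith) (norm_nonneg _)
  have key : ∀ v : EuclideanSpace ℂ (Fin N),
      L v = v - (α : ℂ) • Matrix.toEuclideanLin P
        (Matrix.toEuclideanLin Aᴴ (Matrix.toEuclideanLin A v)) := by
    intro v
    have : L v = Matrix.toEuclideanLin (1 - (α : ℂ) • (P * (Aᴴ * A))) v := by
      rw [hL]
      rw [← Matrix.coe_toEuclideanCLM_eq_toEuclideanLin]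
      rfl
    rw [this]
    ext i
    simp [Matrix.toEuclideanLin_apply, Matrix.sub_mulVec, Matrix.smul_mulVec,
      Matrix.mulVec_mulVec, Matrix.mul_assoc]
  have step : ∀ z : EuclideanSpace ℂ (Fin N), ‖T z - xs‖ ≤ c * ‖z - xs‖ := by
    intro z
    have h1 : T z - xs = D (z - (α : ℂ) • Matrix.toEuclideanLin P
        (Matrix.toEuclideanLin Aᴴ (Matrix.toEuclideanLin A z - y))) -
        D (xs - (α : ℂ) • Matrix.toEuclideanLin P
        (Matrix.toEuclideanLin Aᴴ (Matrix.toEuclideanLin A xs - y))) := by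
      rw [← hT, ← hT, hfix]
    have h2 : (z - (α : ℂ) • Matrix.toEuclideanLin P
        (Matrix.toEuclideanLin Aᴴ (Matrix.toEuclideanLin A z - y))) -
        (xs - (α : ℂ) • Matrix.toEuclideanLin P
        (Matrix.toEuclideanLin Aᴴ (Matrix.toEuclideanLin A xs - y))) = L (z - xs) := by
      rw [key]
      simp only [map_sub, smul_sub]
      abel
    calc ‖T z - xs‖ ≤ (1 + ε) * ‖(z - (α : ℂ) • Matrix.toEuclideanLin P
          (Matrix.toEuclideanLin Aᴴ (Matrix.toEuclideanLin A z - y))) -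
          (xs - (α : ℂ) • Matrix.toEuclideanLin P
          (Matrix.toEuclideanLin Aᴴ (Matrix.toEuclideanLin A xs - y)))‖ := by
            rw [h1]; exact hD _ _
      _ = (1 + ε) * ‖L (z - xs)‖ := by rw [h2]
      _ ≤ (1 + ε) * (‖L‖ * ‖z - xs‖) :=
          mul_le_mul_of_nonneg_left (L.le_opNorm _) (by linarith)
      _ = c * ‖z - xs‖ := by ring
  have main : ∀ k, ‖x (k + 1) - xs‖ ≤ c * ‖x k - xs‖ := fun k => by
    rw [hx]; exact step _
  refine ⟨main, ?_⟩
  have geo : ∀ k, ‖x k - xs‖ ≤ c ^ k * ‖x 0 - xs‖ := by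
    intro k
    induction k with
    | zero => simp
    | succ n ih =>
      calc ‖x (n + 1) - xs‖ ≤ c * ‖x n - xs‖ := main n
        _ ≤ c * (c ^ n * ‖x 0 - xs‖) := mul_le_mul_of_nonneg_left ih hc0
        _ = c ^ (n + 1) * ‖x 0 - xs‖ := by ring
  have hc1 : c < 1 := hcontr
  have htend : Filter.Tendsto (fun k => c ^ k * ‖x 0 - xs‖) Filter.atTop (nhds 0) := by
    have := (tendsto_pow_atTop_nhds_zero_of_lt_one hc0 hc1).mul_const ‖x 0 - xs‖
    simpa using this
  have : Filter.Tendsto (fun k => ‖x k - xs‖) Filter.atTop (nhds 0) :=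
    squeeze_zero (fun k => norm_nonneg _) geo htend
  rw [tendsto_iff_norm_sub_tendsto_zero]
  exact this
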